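/- arXiv:1109.5243 — 3 statements merged into one kernel-verified Lean document; each statement's English description precedes it below -/
import Mathlib

section
/- Let (α, 𝒜, μ) be a finite measure space, let M₀ ∈ 𝒜, let ε > 0, and let F : 𝒜 → ℝ ∪ {+∞} be monotone decreasing with respect to a.e. set inclusion, i.e. μ(M₁ \ M₂) = 0 implies F(M₂) ≤ F(M₁) for measurable M₁, M₂. Suppose M* ∈ 𝒜 with F(M*) < +∞ minimizes the incremental functional M ↦ F(M) + (1/(2ε)) μ(M₀ Δ M)² over all measurable sets M ∈ 𝒜, where M₀ Δ M denotes the symmetric difference. Then μ(M₀ \ M*) = 0, i.e. the minimizer contains M₀ up to a μ-null set. -/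
open MeasureTheory
open scoped symmDiff

/-- Let `(α, 𝒜, μ)` be a finite measure space and `F` a set functional, decreasing with respect
to a.e. set inclusion. If a measurable set `M⋆` with `F(M⋆) < +∞` minimizes
`M ↦ F(M) + (1/(2ε)) μ(M₀ Δ M)²` over measurable sets, then `μ(M₀ \ M⋆) = 0`. -/
theorem shape_incremental_minimizer_contains_initial
    {α : Type*} [MeasurableSpace α] (μ : Measure α) [IsFiniteMeasure μ]
    (F : Set α → WithTop ℝ)
    (hF : ∀ M₁ M₂ : Set α, MeasurableSet M₁ → MeasurableSet M₂ →
      μ (M₁ \ M₂) = 0 → F M₂ ≤ F M₁)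
    (M₀ : Set α) (hM₀ : MeasurableSet M₀)
    (ε : ℝ) (hε : 0 < ε)
    (Mstar : Set α) (hMstar : MeasurableSet Mstar) (hfin : F Mstar ≠ ⊤)
    (hmin : ∀ M : Set α, MeasurableSet M →
      F Mstar + ((1 / (2 * ε) * (μ (M₀ ∆ Mstar)).toReal ^ 2 : ℝ) : WithTop ℝ)
        ≤ F M + ((1 / (2 * ε) * (μ (M₀ ∆ M)).toReal ^ 2 : ℝ) : WithTop ℝ)) :
    μ (M₀ \ Mstar) = 0 := by
  set M : Set α := M₀ ∪ Mstar with hMdef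
  have hMmeas : MeasurableSet M := hM₀.union hMstar
  have hsub : Mstar \ M = ∅ := by
    ext x; simp [hMdef]; tauto
  have hFM : F M ≤ F Mstar := hF Mstar M hMstar hMmeas (by rw [hsub]; simp)
  have hsymm : M₀ ∆ M = Mstar \ M₀ := by
    ext x; simp [hMdef, Set.symmDiff_def]; tauto
  have h1 := hmin M hMmeas
  have h2 : F Mstar + ((1 / (2 * ε) * (μ (M₀ ∆ Mstar)).toReal ^ 2 : ℝ) : WithTop ℝ)
      ≤ F Mstar + ((1 / (2 * ε) * (μ (M₀ ∆ M)).toReal ^ 2 : ℝ) : WithTop ℝ) :=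
    h1.trans (add_le_add_left hFM _)
  have h3 : (1 / (2 * ε) * (μ (M₀ ∆ Mstar)).toReal ^ 2 : ℝ)
      ≤ 1 / (2 * ε) * (μ (M₀ ∆ M)).toReal ^ 2 := by
    have := (WithTop.add_le_add_iff_left hfin).mp h2
    exact_mod_cast this
  have hc : (0:ℝ) < 1 / (2 * ε) := by positivity
  have h4 : (μ (M₀ ∆ Mstar)).toReal ^ 2 ≤ (μ (M₀ ∆ M)).toReal ^ 2 :=
    le_of_mul_le_mul_left (by linarith) hc
  have h5 : (μ (M₀ ∆ Mstar)).toReal ≤ (μ (M₀ ∆ M)).toReal := by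
    have := (pow_le_pow_iff_left₀ ENNReal.toReal_nonneg ENNReal.toReal_nonneg
      (two_ne_zero)).mp h4
    exact this
  have h6 : μ (M₀ ∆ Mstar) ≤ μ (M₀ ∆ M) := by
    rw [← ENNReal.toReal_le_toReal (measure_ne_top μ _) (measure_ne_top μ _)] at *
    exact h5
  have hdisj : Disjoint (M₀ \ Mstar) (Mstar \ M₀) :=
    disjoint_sdiff_sdiff
  have hsum : μ (M₀ \ Mstar) + μ (Mstar \ M₀) = μ (M₀ ∆ Mstar) := by
    rw [Set.symmDiff_def, measure_union hdisj (hMstar.diff hM₀)]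
  rw [hsymm] at h6
  rw [← hsum] at h6
  have hfin' : μ (Mstar \ M₀) ≠ ⊤ := measure_ne_top μ _
  have h7 : μ (M₀ \ Mstar) + μ (Mstar \ M₀) ≤ 0 + μ (Mstar \ M₀) := by
    simpa using h6
  have h8 := (WithTop.add_le_add_iff_right hfin').mp h7
  exact le_antisymm h8 zero_le
end

section
/- Let D ⊂ ℝ^d be a bounded open set and let Ω, Ω₀ ⊆ D be open. Then d_{H^c}(Ω ∩ Ω₀, Ω₀) ≤ d_{H^c}(Ω, Ω₀), where d_{H^c}(Ω₁, Ω₂) = sup over x ∈ closure(D) of |dist(x, closure(D) \ Ω₁) − dist(x, closure(D) \ Ω₂)|. -/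
/-- The Hausdorff complementary distance on open subsets of a bounded open set `D ⊂ ℝ^d`:
`d_{H^c}(Ω₁,Ω₂) = sup_{x ∈ closure D} |dist(x, closure D \ Ω₁) − dist(x, closure D \ Ω₂)|`. -/
noncomputable def dHc {d : ℕ} (D Ω₁ Ω₂ : Set (EuclideanSpace ℝ (Fin d))) : ℝ :=
  ⨆ x : closure D,
    |Metric.infDist (x : EuclideanSpace ℝ (Fin d)) (closure D \ Ω₁)
      - Metric.infDist (x : EuclideanSpace ℝ (Fin d)) (closure D \ Ω₂)|

/-- `infDist` to a union of two nonempty sets is the min of the `infDist`s. -/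
lemma infDist_union_of_nonempty {X : Type*} [MetricSpace X] (x : X) {s t : Set X}
    (hs : s.Nonempty) (ht : t.Nonempty) :
    Metric.infDist x (s ∪ t) = min (Metric.infDist x s) (Metric.infDist x t) := by
  obtain ⟨y, hy⟩ := hs
  obtain ⟨z, hz⟩ := ht
  have hsf : Metric.infEDist x s ≠ ⊤ :=
    ne_top_of_le_ne_top (edist_ne_top x y) (EMetric.infEdist_le_edist_of_mem hy)
  have htf : Metric.infEDist x t ≠ ⊤ :=
    ne_top_of_le_ne_top (edist_ne_top x z) (EMetric.infEdist_le_edist_of_mem hz)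
  rw [Metric.infDist, EMetric.infEdist_union, Metric.infDist, Metric.infDist]
  rcases le_total (Metric.infEDist x s) (Metric.infEDist x t) with h | h
  · rw [min_eq_left h, min_eq_left (ENNReal.toReal_mono htf h)]
  · rw [min_eq_right h, min_eq_right (ENNReal.toReal_mono hsf h)]

/-- Intersecting with `Ω₀` does not increase the Hausdorff complementary distance to `Ω₀`:
`d_{H^c}(Ω ∩ Ω₀, Ω₀) ≤ d_{H^c}(Ω, Ω₀)`. -/
theorem dHc_inter_le {d : ℕ} (D Ω Ω₀ : Set (EuclideanSpace ℝ (Fin d)))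
    (hD : IsOpen D) (hDb : Bornology.IsBounded D)
    (hΩ : IsOpen Ω) (hΩD : Ω ⊆ D)
    (hΩ₀ : IsOpen Ω₀) (hΩ₀D : Ω₀ ⊆ D) :
    dHc D (Ω ∩ Ω₀) Ω₀ ≤ dHc D Ω Ω₀ := by
  set C := closure D with hC
  by_cases hne : Nonempty (closure D)
  · -- pointwise inequality
    have key : ∀ x : closure D,
        |Metric.infDist (x : EuclideanSpace ℝ (Fin d)) (C \ (Ω ∩ Ω₀))
          - Metric.infDist (x : EuclideanSpace ℝ (Fin d)) (C \ Ω₀)|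
        ≤ |Metric.infDist (x : EuclideanSpace ℝ (Fin d)) (C \ Ω)
          - Metric.infDist (x : EuclideanSpace ℝ (Fin d)) (C \ Ω₀)| := by
      intro x
      have hset : C \ (Ω ∩ Ω₀) = (C \ Ω) ∪ (C \ Ω₀) := Set.diff_inter
      rw [hset]
      set a := Metric.infDist (x : EuclideanSpace ℝ (Fin d)) (C \ Ω) with ha
      set b := Metric.infDist (x : EuclideanSpace ℝ (Fin d)) (C \ Ω₀) with hb
      rcases Set.eq_empty_or_nonempty (C \ Ω) with h1 | h1
      · rw [h1, Set.empty_union]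
        have : a = 0 := by rw [ha, h1, Metric.infDist_empty]
        simp [this, hb, abs_sub_comm]
      rcases Set.eq_empty_or_nonempty (C \ Ω₀) with h2 | h2
      · rw [h2, Set.union_empty]
      rw [infDist_union_of_nonempty _ h1 h2]
      rcases min_cases a b with ⟨hm, _⟩ | ⟨hm, _⟩
      · rw [hm]
      · rw [hm]; simp
    -- bound the RHS family
    have hCb : Bornology.IsBounded C := hDb.closure
    obtain ⟨M, hM⟩ := hCb.subset_closedBall (0 : EuclideanSpace ℝ (Fin d))
    have hbd : ∀ (s : Set (EuclideanSpace ℝ (Fin d))) (x : closure D), s ⊆ C →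
        Metric.infDist (x : EuclideanSpace ℝ (Fin d)) s ≤ |M| + |M| := by
      intro s x hs
      rcases Set.eq_empty_or_nonempty s with h | ⟨y, hy⟩
      · rw [h, Metric.infDist_empty]; positivity
      · refine (Metric.infDist_le_dist_of_mem hy).trans ?_
        have hx : dist (x : EuclideanSpace ℝ (Fin d)) 0 ≤ M :=
          Metric.mem_closedBall.mp (hM x.2)
        have hy' : dist y (0 : EuclideanSpace ℝ (Fin d)) ≤ M :=
          Metric.mem_closedBall.mp (hM (hs hy))
        calc dist (x : EuclideanSpace ℝ (Fin d)) y
            ≤ dist (x : EuclideanSpace ℝ (Fin d)) 0 + dist (0 : EuclideanSpace ℝ (Fin d)) y := dist_triangle _ _ _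
          _ ≤ |M| + |M| := by
              rw [dist_comm (0 : EuclideanSpace ℝ (Fin d)) y]
              exact add_le_add (hx.trans (le_abs_self M)) (hy'.trans (le_abs_self M))
    have hbdd : BddAbove (Set.range fun x : closure D =>
        |Metric.infDist (x : EuclideanSpace ℝ (Fin d)) (C \ Ω)
          - Metric.infDist (x : EuclideanSpace ℝ (Fin d)) (C \ Ω₀)|) := by
      refine ⟨|M| + |M|, ?_⟩
      rintro _ ⟨x, rfl⟩
      have h1 := hbd (C \ Ω) x Set.diff_subset
      have h2 := hbd (C \ Ω₀) x Set.diff_subset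
      have n1 := Metric.infDist_nonneg (x := (x : EuclideanSpace ℝ (Fin d))) (s := C \ Ω)
      have n2 := Metric.infDist_nonneg (x := (x : EuclideanSpace ℝ (Fin d))) (s := C \ Ω₀)
      rw [abs_sub_le_iff]
      constructor <;> linarith
    exact ciSup_mono hbdd key
  · rw [not_nonempty_iff] at hne
    unfold dHc
    rw [Real.iSup_of_isEmpty, Real.iSup_of_isEmpty]
end

section
/- Let D ⊂ ℝ^d be a bounded open set, let F be a real-valued (or extended real-valued) functional on the open subsets of D that is increasing with respect to set inclusion (Ω₁ ⊆ Ω₂ implies F(Ω₁) ≤ F(Ω₂)), let Ω₀ ⊆ D be open, and let ε > 0. Then for every open Ω ⊆ D there exists h ≥ 0, namely h = d_{H^c}(Ω ∩ Ω₀, Ω₀), such that F(K_h) + h²/(2ε) ≤ F(Ω) + d_{H^c}(Ω, Ω₀)²/(2ε), where K_h = D \ {x : dist(x, closure(D) \ Ω₀) ≤ h}. -/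
open Metric

/-- Key metric inequality: the distance to a union deviates from the distance to one
piece by no more than the distance to the other piece does. -/
lemma abs_infDist_union_sub {E : Type*} [MetricSpace E] (x : E) (s₁ s₂ : Set E) :
    |infDist x (s₁ ∪ s₂) - infDist x s₂| ≤ |infDist x s₁ - infDist x s₂| := by
  rcases s₂.eq_empty_or_nonempty with h₂ | h₂
  · subst h₂; simp
  rcases s₁.eq_empty_or_nonempty with h₁ | h₁
  · subst h₁; simp
  have hc_le_b : infDist x (s₁ ∪ s₂) ≤ infDist x s₂ :=
    infDist_le_infDist_of_subset Set.subset_union_right h₂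
  have hmin : min (infDist x s₁) (infDist x s₂) ≤ infDist x (s₁ ∪ s₂) := by
    have hne : (s₁ ∪ s₂).Nonempty := h₁.mono Set.subset_union_left
    haveI : Nonempty (s₁ ∪ s₂ : Set E) := hne.to_subtype
    conv_rhs => rw [infDist_eq_iInf]
    apply le_ciInf
    rintro ⟨y, hy | hy⟩
    · exact le_trans (min_le_left _ _) (infDist_le_dist_of_mem hy)
    · exact le_trans (min_le_right _ _) (infDist_le_dist_of_mem hy)
  rw [abs_sub_comm, abs_of_nonneg (by linarith)]
  rcases le_total (infDist x s₁) (infDist x s₂) with h | h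
  · rw [abs_sub_comm, abs_of_nonneg (by linarith)]
    have := min_eq_left h ▸ hmin
    linarith
  · have := min_eq_right h ▸ hmin
    have h0 : (0:ℝ) ≤ |infDist x s₁ - infDist x s₂| := abs_nonneg _
    linarith

lemma infDist_le_diam_closure {E : Type*} [MetricSpace E] {D S : Set E}
    (hDb : Bornology.IsBounded D) {x : E} (hx : x ∈ closure D) (hS : S ⊆ closure D) :
    infDist x S ≤ Metric.diam (closure D) := by
  rcases S.eq_empty_or_nonempty with h | ⟨s, hs⟩
  · simp [h, Metric.diam_nonneg]
  · exact le_trans (infDist_le_dist_of_mem hs)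
      (Metric.dist_le_diam_of_mem hDb.closure hx (hS hs))

lemma dHc_bdd {d : ℕ} {D : Set (EuclideanSpace ℝ (Fin d))}
    (hDb : Bornology.IsBounded D) (Ω₁ Ω₂ : Set (EuclideanSpace ℝ (Fin d))) :
    BddAbove (Set.range fun x : closure D =>
      |infDist (x : EuclideanSpace ℝ (Fin d)) (closure D \ Ω₁)
        - infDist (x : EuclideanSpace ℝ (Fin d)) (closure D \ Ω₂)|) := by
  refine ⟨Metric.diam (closure D), ?_⟩
  rintro _ ⟨x, rfl⟩
  have h1 := infDist_le_diam_closure hDb x.2 (Set.diff_subset (t := Ω₁))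
  have h2 := infDist_le_diam_closure hDb x.2 (Set.diff_subset (t := Ω₂))
  have h1' := infDist_nonneg (x := (x : EuclideanSpace ℝ (Fin d))) (s := closure D \ Ω₁)
  have h2' := infDist_nonneg (x := (x : EuclideanSpace ℝ (Fin d))) (s := closure D \ Ω₂)
  rw [abs_sub_le_iff]
  constructor <;> linarith

/-- For a functional `F` on the open subsets of `D` increasing with respect to set inclusion,
the incremental problem `min_Ω F(Ω) + d_{H^c}(Ω,Ω₀)²/(2ε)` admits competitors of the special
form `K_h = D \ ((closure D \ Ω₀) + B̄_h)`: for every open `Ω ⊆ D`, taking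
`h = d_{H^c}(Ω ∩ Ω₀, Ω₀)` one has `F(K_h) + h²/(2ε) ≤ F(Ω) + d_{H^c}(Ω,Ω₀)²/(2ε)`. -/
theorem incremental_dHc_inner_parallel_competitor
    {d : ℕ} (D Ω₀ : Set (EuclideanSpace ℝ (Fin d)))
    (hD : IsOpen D) (hDb : Bornology.IsBounded D)
    (hΩ₀ : IsOpen Ω₀) (hΩ₀D : Ω₀ ⊆ D)
    (F : Set (EuclideanSpace ℝ (Fin d)) → WithTop ℝ)
    (hF : ∀ Ω₁ Ω₂ : Set (EuclideanSpace ℝ (Fin d)),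
      IsOpen Ω₁ → Ω₁ ⊆ D → IsOpen Ω₂ → Ω₂ ⊆ D → Ω₁ ⊆ Ω₂ → F Ω₁ ≤ F Ω₂)
    (ε : ℝ) (hε : 0 < ε) :
    ∀ Ω : Set (EuclideanSpace ℝ (Fin d)), IsOpen Ω → Ω ⊆ D →
      ∃ h : ℝ, 0 ≤ h ∧ h = dHc D (Ω ∩ Ω₀) Ω₀ ∧
        F (D \ {x | Metric.infDist x (closure D \ Ω₀) ≤ h})
            + ((h ^ 2 / (2 * ε) : ℝ) : WithTop ℝ)
          ≤ F Ω + ((dHc D Ω Ω₀ ^ 2 / (2 * ε) : ℝ) : WithTop ℝ) := by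
  intro Ω hΩ hΩD
  set h : ℝ := dHc D (Ω ∩ Ω₀) Ω₀ with hh
  have h0 : 0 ≤ h := Real.iSup_nonneg fun x => abs_nonneg _
  refine ⟨h, h0, rfl, ?_⟩
  set K : Set (EuclideanSpace ℝ (Fin d)) :=
    D \ {x | Metric.infDist x (closure D \ Ω₀) ≤ h} with hK
  -- K is open
  have hKopen : IsOpen K :=
    hD.sdiff (isClosed_le (continuous_infDist_pt _) continuous_const)
  have hKD : K ⊆ D := Set.diff_subset
  -- K ⊆ Ω ∩ Ω₀
  have hKsub : K ⊆ Ω := by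
    intro x hx
    obtain ⟨hxD, hxgt⟩ := hx
    simp only [Set.mem_setOf_eq, not_le] at hxgt
    by_contra hxΩ
    have hxmem : x ∈ closure D \ (Ω ∩ Ω₀) :=
      ⟨subset_closure hxD, fun hmem => hxΩ hmem.1⟩
    have hzero : infDist x (closure D \ (Ω ∩ Ω₀)) = 0 := infDist_zero_of_mem hxmem
    have hterm : |infDist x (closure D \ (Ω ∩ Ω₀)) - infDist x (closure D \ Ω₀)| ≤ h :=
      le_ciSup (dHc_bdd hDb (Ω ∩ Ω₀) Ω₀) (⟨x, subset_closure hxD⟩ : closure D)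
    rw [hzero, zero_sub, abs_neg, abs_of_nonneg infDist_nonneg] at hterm
    linarith
  -- h ≤ dHc D Ω Ω₀
  have hle : h ≤ dHc D Ω Ω₀ := by
    rcases isEmpty_or_nonempty (closure D) with hE | hNE
    · simp only [hh, dHc, Real.iSup_of_isEmpty, le_refl]
    · refine ciSup_le fun x => ?_
      have hunion : closure D \ (Ω ∩ Ω₀) = (closure D \ Ω) ∪ (closure D \ Ω₀) := by
        rw [Set.diff_inter]
      have := abs_infDist_union_sub (x : EuclideanSpace ℝ (Fin d))
        (closure D \ Ω) (closure D \ Ω₀)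
      rw [← hunion] at this
      exact this.trans (le_ciSup (dHc_bdd hDb Ω Ω₀) x)
  -- combine
  have hsq : h ^ 2 / (2 * ε) ≤ dHc D Ω Ω₀ ^ 2 / (2 * ε) := by
    gcongr
  exact add_le_add (hF K Ω hKopen hKD hΩ hΩD hKsub) (WithTop.coe_le_coe.2 hsq)
end
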